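/- Let m > 0 and λ > 0, and let f : ℝ³ → ℂ be measurable with ∫_{ℝ³} (1+|p|²)^{−1/2} |f(p)|² dp < ∞. Then ∬_{ℝ³×ℝ³} |f(p) − f(q)|² / (G(p,q)+λ)² dp dq = ∫_{ℝ³} conj(f(p)) ( 2π² f(p) / √(ν|p|²+λ) − 2 ∫_{ℝ³} f(q) / (G(p,q)+λ)² dq ) dp. (This identifies the L²(ℝ⁶)-norm of the 'potential' u_f^λ(p,q) = (f(p)−f(q))/(G(p,q)+λ) generated by the charge f with the quadratic form ⟨f, W_λ f⟩ of the explicit operator W_λ.) -/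

import Mathlib

open MeasureTheory
open scoped RealInnerProductSpace

noncomputable section

abbrev E3 := EuclideanSpace ℝ (Fin 3)

def mu (m : ℝ) : ℝ := 2 / (m + 1)

def nu (m : ℝ) : ℝ := m * (m + 2) / (m + 1) ^ 2

def Gker (m : ℝ) (p q : E3) : ℝ := ‖p‖ ^ 2 + ‖q‖ ^ 2 + mu m * ⟪p, q⟫

namespace PotAux

open Filter Set

/-! ### The one-dimensional radial integral -/

lemma radial_hasDeriv (a : ℝ) (ha : 0 < a) (x : ℝ) :
    HasDerivAt (fun r : ℝ => 1 / (2 * Real.sqrt a) * Real.arctan (r / Real.sqrt a)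
      - r / (2 * (r ^ 2 + a))) (x ^ 2 / (x ^ 2 + a) ^ 2) x := by
  have hs : 0 < Real.sqrt a := Real.sqrt_pos.mpr ha
  have hsa : Real.sqrt a ^ 2 = a := Real.sq_sqrt ha.le
  have hx : (0:ℝ) < x ^ 2 + a := by positivity
  have h1 : HasDerivAt (fun r : ℝ => Real.arctan (r / Real.sqrt a))
      ((1 / (1 + (x / Real.sqrt a) ^ 2)) * (1 / Real.sqrt a)) x :=
    (Real.hasDerivAt_arctan (x / Real.sqrt a)).comp (h := fun r : ℝ => r / Real.sqrt a) x ((hasDerivAt_id x).div_const _)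
  have h2 : HasDerivAt (fun r : ℝ => r / (2 * (r ^ 2 + a)))
      ((1 * (2 * (x ^ 2 + a)) - x * (2 * (2 * x))) / (2 * (x ^ 2 + a)) ^ 2) x := by
    refine (hasDerivAt_id x).div ?_ (by positivity)
    have : HasDerivAt (fun r : ℝ => r ^ 2 + a) (2 * x) x := by
      simpa using ((hasDerivAt_pow 2 x).add_const a)
    simpa using this.const_mul 2
  have h := (h1.const_mul (1 / (2 * Real.sqrt a))).sub h2
  refine h.congr_deriv ?_
  field_simp
  ring_nf
  rw [hsa]
  ring

lemma radial_tendsto (a : ℝ) (ha : 0 < a) :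
    Tendsto (fun r : ℝ => 1 / (2 * Real.sqrt a) * Real.arctan (r / Real.sqrt a)
      - r / (2 * (r ^ 2 + a))) atTop (nhds (Real.pi / (4 * Real.sqrt a))) := by
  have hs : 0 < Real.sqrt a := Real.sqrt_pos.mpr ha
  have h1 : Tendsto (fun r : ℝ => 1 / (2 * Real.sqrt a) * Real.arctan (r / Real.sqrt a))
      atTop (nhds (1 / (2 * Real.sqrt a) * (Real.pi / 2))) := by
    refine Tendsto.const_mul _ ?_
    exact (Real.tendsto_arctan_atTop.mono_right nhdsWithin_le_nhds).comp
      (tendsto_id.atTop_div_const hs)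
  have h2 : Tendsto (fun r : ℝ => r / (2 * (r ^ 2 + a))) atTop (nhds 0) := by
    have hb : Tendsto (fun r : ℝ => 1 / (2 * r)) atTop (nhds 0) := by
      apply Tendsto.div_atTop tendsto_const_nhds
      exact tendsto_id.const_mul_atTop two_pos
    refine tendsto_of_tendsto_of_tendsto_of_le_of_le' tendsto_const_nhds hb ?_ ?_
    · filter_upwards [eventually_gt_atTop (0:ℝ)] with r hr
      positivity
    · filter_upwards [eventually_gt_atTop (0:ℝ)] with r hr
      rw [div_le_div_iff₀ (by positivity) (by positivity)]
      nlinarith [hr.le, ha.le]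
  have h := h1.sub h2
  have : 1 / (2 * Real.sqrt a) * (Real.pi / 2) - 0 = Real.pi / (4 * Real.sqrt a) := by
    rw [sub_zero, div_mul_div_comm, one_mul]; ring_nf
  rwa [this] at h

lemma radial_integral (a : ℝ) (ha : 0 < a) :
    ∫ r in Set.Ioi (0:ℝ), r ^ 2 / (r ^ 2 + a) ^ 2 = Real.pi / (4 * Real.sqrt a) := by
  have hd := fun x (_ : x ∈ Set.Ioi (0:ℝ)) => radial_hasDeriv a ha x
  have hval := integral_Ioi_of_hasDerivAt_of_nonneg
    (((radial_hasDeriv a ha 0).continuousAt).continuousWithinAt) hd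
    (fun x _ => by positivity) (radial_tendsto a ha)
  rw [hval]
  simp [Real.arctan_zero]

/-! ### The three-dimensional integral -/

lemma E3_ball_volume : (volume (Metric.ball (0:E3) 1)).toReal = 4 / 3 * Real.pi := by
  rw [EuclideanSpace.volume_ball]
  have h12 : Real.Gamma (1/2) = Real.sqrt Real.pi := Real.Gamma_one_half_eq
  have h32 : Real.Gamma (3/2) = Real.sqrt Real.pi / 2 := by
    rw [show (3:ℝ)/2 = 1/2 + 1 by norm_num, Real.Gamma_add_one (by norm_num), h12]
    ring
  have h52 : Real.Gamma ((Fintype.card (Fin 3) : ℝ) / 2 + 1) = 3 / 4 * Real.sqrt Real.pi := by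
    rw [show ((Fintype.card (Fin 3) : ℝ))/2 + 1 = 3/2 + 1 by simp,
      Real.Gamma_add_one (by norm_num), h32]
    ring
  rw [h52]
  have hπ : (0:ℝ) < Real.pi := Real.pi_pos
  have hsπ : (0:ℝ) < Real.sqrt Real.pi := Real.sqrt_pos.mpr hπ
  have : Real.sqrt Real.pi ^ Fintype.card (Fin 3) / (3 / 4 * Real.sqrt Real.pi)
      = 4 / 3 * Real.pi := by
    simp only [Fintype.card_fin]
    rw [show Real.sqrt Real.pi ^ 3 = Real.pi * Real.sqrt Real.pi by
      rw [pow_succ, Real.sq_sqrt hπ.le]]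
    field_simp
  rw [this]
  simp [ENNReal.toReal_ofReal (by positivity : (0:ℝ) ≤ 4/3*Real.pi)]

lemma int_inv_sq (a : ℝ) (ha : 0 < a) :
    ∫ q : E3, ((‖q‖ ^ 2 + a) ^ 2)⁻¹ = Real.pi ^ 2 / Real.sqrt a := by
  have h := MeasureTheory.integral_fun_norm_addHaar (volume : Measure E3)
    (fun y : ℝ => ((y ^ 2 + a) ^ 2)⁻¹)
  rw [h, finrank_euclideanSpace_fin, measureReal_def, E3_ball_volume]
  have : ∫ y in Set.Ioi (0:ℝ), y ^ (3-1) • ((y ^ 2 + a) ^ 2)⁻¹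
      = Real.pi / (4 * Real.sqrt a) := by
    rw [← radial_integral a ha]
    refine setIntegral_congr_fun measurableSet_Ioi (fun y _ => ?_)
    simp [smul_eq_mul, div_eq_mul_inv]
  rw [this, nsmul_eq_mul, smul_eq_mul]
  have hs : 0 < Real.sqrt a := Real.sqrt_pos.mpr ha
  field_simp
  ring

lemma int_inv_sq_integrable (a : ℝ) (ha : 0 < a) :
    Integrable (fun q : E3 => ((‖q‖ ^ 2 + a) ^ 2)⁻¹) := by
  set u := min 1 a with hu
  have hu0 : 0 < u := lt_min one_pos ha
  have h4 : Integrable (fun q : E3 => (1 + ‖q‖) ^ (-(4:ℝ))) := by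
    apply integrable_one_add_norm
    rw [finrank_euclideanSpace_fin]; norm_num
  refine ((h4.const_mul (4 * u⁻¹ ^ 2)).mono' ?_ ?_)
  · apply Continuous.aestronglyMeasurable
    have hpos : ∀ q : E3, (0:ℝ) < (‖q‖ ^ 2 + a) ^ 2 := fun q => by positivity
    exact Continuous.inv₀ (by continuity) (fun q => (hpos q).ne')
  · refine Eventually.of_forall (fun q => ?_)
    set t := ‖q‖ with ht
    have ht0 : 0 ≤ t := norm_nonneg q
    rw [Real.norm_eq_abs, abs_of_nonneg (by positivity)]
    have hr4 : (1 + t) ^ (-(4:ℝ)) = ((1 + t) ^ (4:ℕ))⁻¹ := by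
      rw [Real.rpow_neg (by positivity)]
      rw [show (4:ℝ) = ((4:ℕ):ℝ) by norm_num, Real.rpow_natCast]
    rw [hr4]
    have h1 : (1 + t) ^ 2 * u ≤ 2 * (t ^ 2 + a) := by
      have hua : u ≤ a := min_le_right _ _
      have hu1 : u ≤ 1 := min_le_left _ _
      nlinarith [sq_nonneg (1 - t), sq_nonneg t]
    have key : (1 + t) ^ 4 * u ^ 2 ≤ 4 * ((t ^ 2 + a) ^ 2) := by
      have h0 : (0:ℝ) ≤ (1 + t) ^ 2 * u := by positivity
      nlinarith [h1, h0]
    have hX : (0:ℝ) < (t ^ 2 + a) ^ 2 := by positivity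
    have hY : (0:ℝ) < (1 + t) ^ 4 := by positivity
    rw [show (4 * u⁻¹ ^ 2 * ((1+t)^4)⁻¹ : ℝ) = 4 / (u ^ 2 * (1+t)^4) by
      field_simp]
    rw [inv_eq_one_div, div_le_div_iff₀ hX (by positivity)]
    nlinarith [key]

/-! ### Algebra of `Gker` -/

lemma nu_eq (m : ℝ) (hm : 0 < m) : nu m + (mu m / 2) ^ 2 = 1 := by
  have h1 : m + 1 ≠ 0 := by positivity
  unfold nu mu
  field_simp
  ring

lemma nu_pos (m : ℝ) (hm : 0 < m) : 0 < nu m := by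
  unfold nu
  apply div_pos (by nlinarith) (by positivity)

lemma Gker_symm (m : ℝ) (p q : E3) : Gker m p q = Gker m q p := by
  unfold Gker
  rw [real_inner_comm]
  ring

lemma Gker_decomp (m lam : ℝ) (hm : 0 < m) (p q : E3) :
    Gker m p q + lam = ‖q + (mu m / 2) • p‖ ^ 2 + (nu m * ‖p‖ ^ 2 + lam) := by
  have h1 : ‖q + (mu m / 2) • p‖ ^ 2
      = ‖q‖ ^ 2 + 2 * ((mu m / 2) * ⟪p, q⟫) + (mu m / 2) ^ 2 * ‖p‖ ^ 2 := by
    rw [norm_add_sq_real, real_inner_smul_right, norm_smul]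
    rw [mul_pow, Real.norm_eq_abs, sq_abs, real_inner_comm q p]
  rw [h1]
  have h2 := nu_eq m hm
  unfold Gker
  nlinarith [h2, sq_nonneg ‖p‖]

lemma Gker_lam_pos (m lam : ℝ) (hm : 0 < m) (hlam : 0 < lam) (p q : E3) :
    0 < Gker m p q + lam := by
  rw [Gker_decomp m lam hm p q]
  have h1 := nu_pos m hm
  have h2 : 0 ≤ ‖q + (mu m / 2) • p‖ ^ 2 := sq_nonneg _
  nlinarith [sq_nonneg ‖p‖]

/-! ### The weight `Wk` and its `q`-integral -/

def Wk (m lam : ℝ) (p q : E3) : ℝ := ((Gker m p q + lam) ^ 2)⁻¹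

def Kk (m lam : ℝ) (p : E3) : ℝ := Real.pi ^ 2 / Real.sqrt (nu m * ‖p‖ ^ 2 + lam)

lemma Wk_nonneg (m lam : ℝ) (p q : E3) : 0 ≤ Wk m lam p q := by
  unfold Wk; positivity

lemma Wk_symm (m lam : ℝ) (p q : E3) : Wk m lam p q = Wk m lam q p := by
  unfold Wk; rw [Gker_symm]

lemma Apos (m lam : ℝ) (hm : 0 < m) (hlam : 0 < lam) (p : E3) :
    0 < nu m * ‖p‖ ^ 2 + lam := by
  have h1 := nu_pos m hm
  nlinarith [sq_nonneg ‖p‖]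

lemma Wk_integrable (m lam : ℝ) (hm : 0 < m) (hlam : 0 < lam) (p : E3) :
    Integrable (Wk m lam p) := by
  have hA := Apos m lam hm hlam p
  have h := (int_inv_sq_integrable (nu m * ‖p‖ ^ 2 + lam) hA).comp_add_right ((mu m / 2) • p)
  refine h.congr (Eventually.of_forall fun q => ?_)
  unfold Wk
  rw [Gker_decomp m lam hm p q]

lemma Wk_integral (m lam : ℝ) (hm : 0 < m) (hlam : 0 < lam) (p : E3) :
    ∫ q : E3, Wk m lam p q = Kk m lam p := by
  have hA := Apos m lam hm hlam p
  unfold Wk Kk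
  simp_rw [Gker_decomp m lam hm p]
  rw [MeasureTheory.integral_add_right_eq_self
    (fun q : E3 => ((‖q‖ ^ 2 + (nu m * ‖p‖ ^ 2 + lam)) ^ 2)⁻¹) ((mu m / 2) • p)]
  exact int_inv_sq _ hA


lemma Kk_nonneg (m lam : ℝ) (p : E3) : 0 ≤ Kk m lam p := by
  unfold Kk
  positivity

lemma Kk_continuous (m lam : ℝ) (hm : 0 < m) (hlam : 0 < lam) :
    Continuous (Kk m lam) := by
  unfold Kk
  refine Continuous.div continuous_const ?_ (fun p => ?_)
  · exact Real.continuous_sqrt.comp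
      ((continuous_const.mul ((continuous_norm).pow 2)).add continuous_const)
  · exact (Real.sqrt_pos.mpr (Apos m lam hm hlam p)).ne'

lemma Kf_integrable (m lam : ℝ) (hm : 0 < m) (hlam : 0 < lam)
    (f : E3 → ℂ) (hf : Measurable f)
    (hf2 : Integrable (fun p => (1 + ‖p‖ ^ 2) ^ (-(1 : ℝ) / 2) * ‖f p‖ ^ 2)) :
    Integrable (fun p : E3 => ‖f p‖ ^ 2 * Kk m lam p) := by
  set c := min (nu m) lam with hc
  have hc0 : 0 < c := lt_min (nu_pos m hm) hlam
  have hsc : 0 < Real.sqrt c := Real.sqrt_pos.mpr hc0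
  refine (hf2.const_mul (Real.pi ^ 2 / Real.sqrt c)).mono' ?_ ?_
  · exact (((hf.norm.pow measurable_const).mul
      (Kk_continuous m lam hm hlam).measurable)).aestronglyMeasurable
  · refine Eventually.of_forall fun p => ?_
    have hA := Apos m lam hm hlam p
    have hKb : Kk m lam p ≤ (Real.pi ^ 2 / Real.sqrt c) * (1 + ‖p‖ ^ 2) ^ (-(1:ℝ)/2) := by
      have h1 : c * (1 + ‖p‖ ^ 2) ≤ nu m * ‖p‖ ^ 2 + lam := by
        have h2 : c ≤ nu m := min_le_left _ _
        have h3 : c ≤ lam := min_le_right _ _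
        nlinarith [sq_nonneg ‖p‖]
      have h2 : Real.sqrt c * Real.sqrt (1 + ‖p‖ ^ 2) ≤ Real.sqrt (nu m * ‖p‖ ^ 2 + lam) := by
        rw [← Real.sqrt_mul hc0.le]
        exact Real.sqrt_le_sqrt h1
      have h4 : 0 < Real.sqrt (1 + ‖p‖ ^ 2) := Real.sqrt_pos.mpr (by positivity)
      have h5 : Kk m lam p ≤ Real.pi ^ 2 / (Real.sqrt c * Real.sqrt (1 + ‖p‖ ^ 2)) := by
        unfold Kk
        exact div_le_div_of_nonneg_left (by positivity) (by positivity) h2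
      have h6 : (1 + ‖p‖ ^ 2 : ℝ) ^ (-(1:ℝ)/2) = (Real.sqrt (1 + ‖p‖ ^ 2))⁻¹ := by
        rw [show (-(1:ℝ))/2 = -(1/2) by norm_num, Real.rpow_neg (by positivity),
          Real.sqrt_eq_rpow]
      rw [h6]
      calc Kk m lam p ≤ Real.pi ^ 2 / (Real.sqrt c * Real.sqrt (1 + ‖p‖ ^ 2)) := h5
        _ = (Real.pi ^ 2 / Real.sqrt c) * (Real.sqrt (1 + ‖p‖ ^ 2))⁻¹ := by
            rw [div_mul_eq_div_div, div_eq_mul_inv]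
    rw [Real.norm_eq_abs, abs_of_nonneg (mul_nonneg (sq_nonneg _) (Kk_nonneg m lam p))]
    have hw : (0:ℝ) ≤ (1 + ‖p‖ ^ 2) ^ (-(1:ℝ)/2) := Real.rpow_nonneg (by positivity) _
    calc ‖f p‖ ^ 2 * Kk m lam p
        ≤ ‖f p‖ ^ 2 * ((Real.pi ^ 2 / Real.sqrt c) * (1 + ‖p‖ ^ 2) ^ (-(1:ℝ)/2)) :=
          mul_le_mul_of_nonneg_left hKb (sq_nonneg _)
      _ = Real.pi ^ 2 / Real.sqrt c * ((1 + ‖p‖ ^ 2) ^ (-(1:ℝ)/2) * ‖f p‖ ^ 2) := by ring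

lemma norm_sub_sq_complex (x y : ℂ) :
    ‖x - y‖ ^ 2 = ‖x‖ ^ 2 + ‖y‖ ^ 2 - 2 * (star x * y).re := by
  simp only [Complex.sq_norm, Complex.normSq_apply, Complex.sub_re,
    Complex.sub_im, Complex.mul_re, Complex.mul_im, Complex.star_def, Complex.conj_re,
    Complex.conj_im]
  ring

lemma star_mul_self_complex (z : ℂ) : star z * z = ((‖z‖ ^ 2 : ℝ) : ℂ) := by
  rw [Complex.star_def, ← Complex.normSq_eq_conj_mul_self, Complex.normSq_eq_norm_sq]

end PotAux

set_option maxHeartbeats 1000000 in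
/-- The `L²(ℝ⁶)`-norm of the potential `u_f^λ(p,q) = (f(p)−f(q))/(G(p,q)+λ)`
generated by the charge `f` coincides with the quadratic form `⟨f, W_λ f⟩` of the
explicit operator `W_λ`. -/
theorem potential_norm_equals_Wlambda_form
    (m lam : ℝ) (hm : 0 < m) (hlam : 0 < lam)
    (f : E3 → ℂ) (hf : Measurable f)
    (hf2 : Integrable (fun p => (1 + ‖p‖ ^ 2) ^ (-(1 : ℝ) / 2) * ‖f p‖ ^ 2)) :
    ((∫ p : E3, ∫ q : E3, ‖f p - f q‖ ^ 2 / (Gker m p q + lam) ^ 2 : ℝ) : ℂ)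
      = ∫ p : E3, star (f p) *
          (((2 * Real.pi ^ 2 : ℝ) : ℂ) * f p
              / ((Real.sqrt (nu m * ‖p‖ ^ 2 + lam) : ℝ) : ℂ)
            - 2 * ∫ q : E3, f q / (((Gker m p q + lam) ^ 2 : ℝ) : ℂ)) := by
  classical
  open PotAux in
  set P : Measure (E3 × E3) := (volume : Measure E3).prod volume with hPdef
  have hWint : ∀ p, Integrable (PotAux.Wk m lam p) := PotAux.Wk_integrable m lam hm hlam
  have hWval : ∀ p, ∫ q : E3, PotAux.Wk m lam p q = PotAux.Kk m lam p :=
    PotAux.Wk_integral m lam hm hlam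
  have hGpos := PotAux.Gker_lam_pos m lam hm hlam
  -- measurability
  have contW : Continuous (fun z : E3 × E3 => PotAux.Wk m lam z.1 z.2) := by
    have hG : Continuous (fun z : E3 × E3 => Gker m z.1 z.2 + lam) := by
      have hi : Continuous fun z : E3 × E3 => (inner ℝ z.1 z.2 : ℝ) := continuous_inner
      unfold Gker
      exact (((continuous_fst.norm.pow 2).add (continuous_snd.norm.pow 2)).add
        (continuous_const.mul hi)).add continuous_const
    exact ((hG.pow 2).inv₀ (fun z => pow_ne_zero _ (hGpos z.1 z.2).ne'))
  have measW : Measurable (fun z : E3 × E3 => PotAux.Wk m lam z.1 z.2) := contW.measurable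
  have mf1 : Measurable (fun z : E3 × E3 => f z.1) := hf.comp measurable_fst
  have mf2 : Measurable (fun z : E3 × E3 => f z.2) := hf.comp measurable_snd
  -- basic integrability
  have F2 : Integrable (fun p : E3 => ‖f p‖ ^ 2 * PotAux.Kk m lam p) :=
    PotAux.Kf_integrable m lam hm hlam f hf hf2
  have G1 : Integrable (fun z : E3 × E3 => ‖f z.1‖ ^ 2 * PotAux.Wk m lam z.1 z.2) P := by
    have hsm : AEStronglyMeasurable
        (fun z : E3 × E3 => ‖f z.1‖ ^ 2 * PotAux.Wk m lam z.1 z.2) P :=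
      ((mf1.norm.pow measurable_const).mul measW).aestronglyMeasurable
    refine (integrable_prod_iff hsm).mpr ⟨?_, ?_⟩
    · exact Filter.Eventually.of_forall fun p => by
        simpa using (hWint p).const_mul (‖f p‖ ^ 2)
    · refine F2.congr (Filter.Eventually.of_forall fun p => ?_)
      dsimp only
      rw [← hWval p, ← integral_const_mul]
      refine integral_congr_ae (Filter.Eventually.of_forall fun q => ?_)
      dsimp only
      rw [Real.norm_eq_abs,
        abs_of_nonneg (mul_nonneg (sq_nonneg _) (PotAux.Wk_nonneg m lam p q))]
  have G2 : Integrable (fun z : E3 × E3 => ‖f z.2‖ ^ 2 * PotAux.Wk m lam z.1 z.2) P := by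
    have h := G1.swap
    refine h.congr (Filter.Eventually.of_forall fun z => ?_)
    show ‖f z.2‖ ^ 2 * PotAux.Wk m lam z.2 z.1 = _
    rw [PotAux.Wk_symm m lam z.2 z.1]
  have hbnd : Integrable (fun z : E3 × E3 =>
      (1/2 : ℝ) * (‖f z.1‖ ^ 2 * PotAux.Wk m lam z.1 z.2
        + ‖f z.2‖ ^ 2 * PotAux.Wk m lam z.1 z.2)) P := (G1.add G2).const_mul _
  have crossb : ∀ z : E3 × E3, ‖f z.1‖ * ‖f z.2‖ * PotAux.Wk m lam z.1 z.2
      ≤ (1/2 : ℝ) * (‖f z.1‖ ^ 2 * PotAux.Wk m lam z.1 z.2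
        + ‖f z.2‖ ^ 2 * PotAux.Wk m lam z.1 z.2) := fun z => by
    nlinarith [mul_nonneg (sq_nonneg (‖f z.1‖ - ‖f z.2‖)) (PotAux.Wk_nonneg m lam z.1 z.2)]
  have habsle : ∀ z : E3 × E3, ∀ r : ℝ, |r| ≤ ‖f z.1‖ * ‖f z.2‖ →
      |r * PotAux.Wk m lam z.1 z.2| ≤ (1/2 : ℝ) * (‖f z.1‖ ^ 2 * PotAux.Wk m lam z.1 z.2
        + ‖f z.2‖ ^ 2 * PotAux.Wk m lam z.1 z.2) := by
    intro z r hr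
    rw [abs_mul, abs_of_nonneg (PotAux.Wk_nonneg m lam z.1 z.2)]
    refine le_trans ?_ (crossb z)
    exact mul_le_mul_of_nonneg_right hr (PotAux.Wk_nonneg m lam z.1 z.2)
  have G3r : Integrable (fun z : E3 × E3 =>
      (star (f z.1) * f z.2).re * PotAux.Wk m lam z.1 z.2) P := by
    refine hbnd.mono' ?_ (Filter.Eventually.of_forall fun z => ?_)
    · exact ((Complex.measurable_re.comp ((continuous_star.measurable.comp mf1).mul mf2)).mul measW).aestronglyMeasurable
    · rw [Real.norm_eq_abs]
      refine habsle z _ ?_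
      calc |(star (f z.1) * f z.2).re| ≤ ‖star (f z.1) * f z.2‖ :=
            Complex.abs_re_le_norm _
        _ = ‖f z.1‖ * ‖f z.2‖ := by
            rw [norm_mul, norm_star]
  have G3i : Integrable (fun z : E3 × E3 =>
      (star (f z.1) * f z.2).im * PotAux.Wk m lam z.1 z.2) P := by
    refine hbnd.mono' ?_ (Filter.Eventually.of_forall fun z => ?_)
    · exact ((Complex.measurable_im.comp ((continuous_star.measurable.comp mf1).mul mf2)).mul measW).aestronglyMeasurable
    · rw [Real.norm_eq_abs]
      refine habsle z _ ?_
      calc |(star (f z.1) * f z.2).im| ≤ ‖star (f z.1) * f z.2‖ :=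
            Complex.abs_im_le_norm _
        _ = ‖f z.1‖ * ‖f z.2‖ := by
            rw [norm_mul, norm_star]
  have G3c : Integrable (fun z : E3 × E3 =>
      star (f z.1) * f z.2 * ((PotAux.Wk m lam z.1 z.2 : ℝ) : ℂ)) P := by
    refine hbnd.mono' ?_ (Filter.Eventually.of_forall fun z => ?_)
    · exact (((continuous_star.measurable.comp mf1).mul mf2).mul
        (Complex.measurable_ofReal.comp measW)).aestronglyMeasurable
    · rw [norm_mul, Complex.norm_real, Real.norm_eq_abs,
        abs_of_nonneg (PotAux.Wk_nonneg m lam z.1 z.2), norm_mul, norm_star]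
      exact le_trans (le_of_eq rfl) (crossb z)
  -- inner splitting (a.e. in p)
  have inner_eq : ∀ᵐ p : E3 ∂(volume : Measure E3),
      ∫ q : E3, ‖f p - f q‖ ^ 2 / (Gker m p q + lam) ^ 2
        = ‖f p‖ ^ 2 * PotAux.Kk m lam p
          + (∫ q : E3, ‖f q‖ ^ 2 * PotAux.Wk m lam p q)
          - 2 * ∫ q : E3, (star (f p) * f q).re * PotAux.Wk m lam p q := by
    filter_upwards [G2.prod_right_ae, G3r.prod_right_ae] with p h2 h3
    have h1 : Integrable (fun q : E3 => ‖f p‖ ^ 2 * PotAux.Wk m lam p q) :=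
      (hWint p).const_mul _
    have h2' : Integrable (fun q : E3 => ‖f q‖ ^ 2 * PotAux.Wk m lam p q) := by
      simpa using h2
    have h3' : Integrable (fun q : E3 => (star (f p) * f q).re * PotAux.Wk m lam p q) := by
      simpa using h3
    have step : ∫ q : E3, ‖f p - f q‖ ^ 2 / (Gker m p q + lam) ^ 2
        = ∫ q : E3, (‖f p‖ ^ 2 * PotAux.Wk m lam p q + ‖f q‖ ^ 2 * PotAux.Wk m lam p q
            - 2 * ((star (f p) * f q).re * PotAux.Wk m lam p q)) := by
      refine integral_congr_ae (Filter.Eventually.of_forall fun q => ?_)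
      dsimp only
      rw [div_eq_mul_inv, PotAux.norm_sub_sq_complex (f p) (f q)]
      unfold PotAux.Wk
      ring
    have hadd : Integrable (fun q : E3 => ‖f p‖ ^ 2 * PotAux.Wk m lam p q
        + ‖f q‖ ^ 2 * PotAux.Wk m lam p q) := h1.add h2'
    rw [step, integral_sub hadd (h3'.const_mul 2), integral_add h1 h2',
      integral_const_mul, integral_const_mul, hWval p]
  -- outer splitting
  have LHSr : ∫ p : E3, ∫ q : E3, ‖f p - f q‖ ^ 2 / (Gker m p q + lam) ^ 2
      = (∫ p : E3, ‖f p‖ ^ 2 * PotAux.Kk m lam p)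
        + (∫ p : E3, ∫ q : E3, ‖f q‖ ^ 2 * PotAux.Wk m lam p q)
        - 2 * ∫ p : E3, ∫ q : E3, (star (f p) * f q).re * PotAux.Wk m lam p q := by
    have i2 : Integrable (fun p : E3 => ∫ q : E3, ‖f q‖ ^ 2 * PotAux.Wk m lam p q) := by
      simpa using G2.integral_prod_left
    have i3 : Integrable
        (fun p : E3 => ∫ q : E3, (star (f p) * f q).re * PotAux.Wk m lam p q) := by
      simpa using G3r.integral_prod_left
    have hadd2 : Integrable (fun p : E3 => ‖f p‖ ^ 2 * PotAux.Kk m lam p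
        + ∫ q : E3, ‖f q‖ ^ 2 * PotAux.Wk m lam p q) := F2.add i2
    rw [integral_congr_ae inner_eq, integral_sub hadd2 (i3.const_mul 2),
      integral_add F2 i2, integral_const_mul]
  -- the second term equals the first
  have hT2 : ∫ p : E3, ∫ q : E3, ‖f q‖ ^ 2 * PotAux.Wk m lam p q
      = ∫ p : E3, ‖f p‖ ^ 2 * PotAux.Kk m lam p := by
    have e1 : ∫ p : E3, ∫ q : E3, ‖f q‖ ^ 2 * PotAux.Wk m lam p q
        = ∫ z : E3 × E3, ‖f z.2‖ ^ 2 * PotAux.Wk m lam z.1 z.2 ∂P :=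
      (integral_prod _ G2).symm
    have e2 : ∫ z : E3 × E3, ‖f z.2‖ ^ 2 * PotAux.Wk m lam z.1 z.2 ∂P
        = ∫ z : E3 × E3, ‖f z.1‖ ^ 2 * PotAux.Wk m lam z.1 z.2 ∂P := by
      rw [hPdef, ← MeasureTheory.integral_prod_swap
        (fun z : E3 × E3 => ‖f z.1‖ ^ 2 * PotAux.Wk m lam z.1 z.2)]
      refine integral_congr_ae (Filter.Eventually.of_forall fun z => ?_)
      dsimp only [Prod.swap]
      rw [PotAux.Wk_symm m lam z.1 z.2]
    have e3 : ∫ z : E3 × E3, ‖f z.1‖ ^ 2 * PotAux.Wk m lam z.1 z.2 ∂P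
        = ∫ p : E3, ‖f p‖ ^ 2 * PotAux.Kk m lam p := by
      rw [integral_prod _ G1]
      refine integral_congr_ae (Filter.Eventually.of_forall fun p => ?_)
      dsimp only
      rw [integral_const_mul, hWval p]
    rw [e1, e2, e3]
  have hT3 : ∫ p : E3, ∫ q : E3, (star (f p) * f q).re * PotAux.Wk m lam p q
      = ∫ z : E3 × E3, (star (f z.1) * f z.2).re * PotAux.Wk m lam z.1 z.2 ∂P :=
    (integral_prod _ G3r).symm
  -- rewrite the right-hand side pointwise
  have point : ∀ p : E3, star (f p) *
        (((2 * Real.pi ^ 2 : ℝ) : ℂ) * f p / ((Real.sqrt (nu m * ‖p‖ ^ 2 + lam) : ℝ) : ℂ)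
          - 2 * ∫ q : E3, f q / (((Gker m p q + lam) ^ 2 : ℝ) : ℂ))
      = ((2 * Real.pi ^ 2 * ‖f p‖ ^ 2 / Real.sqrt (nu m * ‖p‖ ^ 2 + lam) : ℝ) : ℂ)
        - 2 * ∫ q : E3, star (f p) * f q * ((PotAux.Wk m lam p q : ℝ) : ℂ) := by
    intro p
    rw [mul_sub]
    congr 1
    · have hz := PotAux.star_mul_self_complex (f p)
      calc star (f p) * (((2 * Real.pi ^ 2 : ℝ) : ℂ) * f p
            / ((Real.sqrt (nu m * ‖p‖ ^ 2 + lam) : ℝ) : ℂ))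
          = ((2 * Real.pi ^ 2 : ℝ) : ℂ) * (star (f p) * f p)
            / ((Real.sqrt (nu m * ‖p‖ ^ 2 + lam) : ℝ) : ℂ) := by ring
        _ = _ := by rw [hz]; push_cast; ring
    · rw [show star (f p) * (2 * ∫ q : E3, f q / (((Gker m p q + lam) ^ 2 : ℝ) : ℂ))
          = 2 * (star (f p) * ∫ q : E3, f q / (((Gker m p q + lam) ^ 2 : ℝ) : ℂ)) by ring]
      congr 1
      rw [← integral_const_mul]
      refine integral_congr_ae (Filter.Eventually.of_forall fun q => ?_)
      dsimp only
      unfold PotAux.Wk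
      push_cast
      ring
  rw [integral_congr_ae (Filter.Eventually.of_forall point)]
  have hFc : Integrable (fun p : E3 =>
      2 * Real.pi ^ 2 * ‖f p‖ ^ 2 / Real.sqrt (nu m * ‖p‖ ^ 2 + lam)) := by
    have heq : (fun p : E3 => 2 * Real.pi ^ 2 * ‖f p‖ ^ 2 / Real.sqrt (nu m * ‖p‖ ^ 2 + lam))
        = fun p : E3 => 2 * (‖f p‖ ^ 2 * PotAux.Kk m lam p) := by
      funext p; unfold PotAux.Kk; ring
    rw [heq]; exact F2.const_mul 2
  have j1 : Integrable (fun p : E3 =>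
      ((2 * Real.pi ^ 2 * ‖f p‖ ^ 2 / Real.sqrt (nu m * ‖p‖ ^ 2 + lam) : ℝ) : ℂ)) :=
    hFc.ofReal
  have j2 : Integrable (fun p : E3 =>
      (2:ℂ) * ∫ q : E3, star (f p) * f q * ((PotAux.Wk m lam p q : ℝ) : ℂ)) := by
    have h := G3c.integral_prod_left
    exact (by simpa using h : Integrable
      (fun p : E3 => ∫ q : E3, star (f p) * f q * ((PotAux.Wk m lam p q : ℝ) : ℂ))).const_mul 2
  have hofr : ∫ p : E3,
        ((2 * Real.pi ^ 2 * ‖f p‖ ^ 2 / Real.sqrt (nu m * ‖p‖ ^ 2 + lam) : ℝ) : ℂ)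
      = ((∫ p : E3, 2 * Real.pi ^ 2 * ‖f p‖ ^ 2 / Real.sqrt (nu m * ‖p‖ ^ 2 + lam) : ℝ) : ℂ) :=
    integral_ofReal
  rw [integral_sub j1 j2, hofr, integral_const_mul]
  -- imaginary part of the cross term vanishes
  have him0 : ∫ z : E3 × E3, (star (f z.1) * f z.2).im * PotAux.Wk m lam z.1 z.2 ∂P = 0 := by
    have hsw := MeasureTheory.integral_prod_swap
      (fun z : E3 × E3 => (star (f z.1) * f z.2).im * PotAux.Wk m lam z.1 z.2)
      (μ := (volume : Measure E3)) (ν := (volume : Measure E3))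
    have hneg : ∫ z : E3 × E3, (star (f z.1) * f z.2).im * PotAux.Wk m lam z.1 z.2 ∂P
        = - ∫ z : E3 × E3, (star (f z.1) * f z.2).im * PotAux.Wk m lam z.1 z.2 ∂P := by
      rw [hPdef]
      conv_lhs => rw [← hsw]
      rw [← integral_neg]
      refine integral_congr_ae (Filter.Eventually.of_forall fun z => ?_)
      dsimp only [Prod.swap]
      have h' : star (f z.2) * f z.1 = star (star (f z.1) * f z.2) := by
        rw [star_mul, star_star]
      rw [h', PotAux.Wk_symm m lam z.2 z.1]
      simp [Complex.star_def]
      ring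
    linarith [hneg]
  -- the complex cross integral is the real one
  have hc3 : ∫ p : E3, ∫ q : E3, star (f p) * f q * ((PotAux.Wk m lam p q : ℝ) : ℂ)
      = ((∫ z : E3 × E3, (star (f z.1) * f z.2).re * PotAux.Wk m lam z.1 z.2 ∂P : ℝ) : ℂ) := by
    rw [← integral_prod _ G3c]
    have hre := integral_re G3c
    have hiI := integral_im G3c
    simp only [RCLike.re_to_complex, RCLike.im_to_complex] at hre hiI
    apply Complex.ext
    · rw [Complex.ofReal_re, ← hre]
      refine integral_congr_ae (Filter.Eventually.of_forall fun z => ?_)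
      dsimp only
      simp [Complex.mul_re]
    · rw [Complex.ofReal_im, ← hiI]
      rw [← him0]
      refine integral_congr_ae (Filter.Eventually.of_forall fun z => ?_)
      dsimp only
      simp [Complex.mul_im]
  have hR1 : ∫ p : E3, 2 * Real.pi ^ 2 * ‖f p‖ ^ 2 / Real.sqrt (nu m * ‖p‖ ^ 2 + lam)
      = 2 * ∫ p : E3, ‖f p‖ ^ 2 * PotAux.Kk m lam p := by
    rw [← integral_const_mul]
    refine integral_congr_ae (Filter.Eventually.of_forall fun p => ?_)
    unfold PotAux.Kk; ring
  rw [LHSr, hT2, hT3, hc3, hR1]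
  push_cast
  ring
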